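/- Let X and Y be Banach spaces, k ≥ 1, and suppose every P ∈ 𝒫(ᵏX : Y) can be approximated in norm by polynomials that strongly attain their norm. Then the set ρ̃𝒫(ᵏX) of strong norm-attainment points is a norming subset for 𝒫(ᵏX : Y): for every P ∈ 𝒫(ᵏX : Y), ‖P‖ = sup{‖P(x)‖ : x ∈ ρ̃𝒫(ᵏX)}. -/

import Mathlib

open Metric Filter Topology Set

/-- The sup norm of a function over the closed unit ball. -/
noncomputable def supNorm {X Y : Type*} [NormedAddCommGroup X] [NormedAddCommGroup Y]
    (f : X → Y) : ℝ :=
  sSup ((fun x => ‖f x‖) '' Metric.closedBall (0 : X) 1)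

/-- `f` strongly attains its (sup) norm at `x₀`: every maximizing sequence in the closed unit
ball has a subsequence converging to a unimodular multiple of `x₀`. -/
def StronglyAttains (𝕂 : Type*) [RCLike 𝕂] {X Y : Type*} [NormedAddCommGroup X]
    [NormedSpace 𝕂 X] [NormedAddCommGroup Y] (f : X → Y) (x₀ : X) : Prop :=
  ∀ xs : ℕ → X, (∀ n, xs n ∈ Metric.closedBall (0 : X) 1) →
    Tendsto (fun n => ‖f (xs n)‖) atTop (nhds (supNorm f)) →
    ∃ (α : 𝕂) (φ : ℕ → ℕ), StrictMono φ ∧ ‖α‖ = 1 ∧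
      Tendsto (fun n => xs (φ n)) atTop (nhds (α • x₀))

/-- The `k`-homogeneous polynomial associated to a continuous `k`-multilinear map. -/
noncomputable def polyEval {𝕂 : Type*} [RCLike 𝕂] {X Y : Type*} [NormedAddCommGroup X]
    [NormedSpace 𝕂 X] [NormedAddCommGroup Y] [NormedSpace 𝕂 Y] {k : ℕ}
    (L : ContinuousMultilinearMap 𝕂 (fun _ : Fin k => X) Y) : X → Y :=
  fun x => L (fun _ => x)

/-- The set `ρ̃𝒫(ᵏX)` of points of the closed unit ball at which some nonzero bounded
`k`-homogeneous scalar polynomial strongly attains its norm. -/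
def polyAttainPts (𝕂 : Type*) [RCLike 𝕂] (X : Type*) [NormedAddCommGroup X]
    [NormedSpace 𝕂 X] (k : ℕ) : Set X :=
  {x₀ | x₀ ∈ Metric.closedBall (0 : X) 1 ∧
    ∃ L : ContinuousMultilinearMap 𝕂 (fun _ : Fin k => X) 𝕂,
      polyEval L ≠ 0 ∧ StronglyAttains 𝕂 (polyEval L) x₀}

/-- Numerical radius `v(f) = sup { |x*(f x)| : (x, x*) ∈ Π(X) }`. -/
noncomputable def numRadius (𝕂 : Type*) [RCLike 𝕂] {X : Type*} [NormedAddCommGroup X]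
    [NormedSpace 𝕂 X] (f : X → X) : ℝ :=
  sSup {r | ∃ (x : X) (x' : X →L[𝕂] 𝕂), ‖x‖ = 1 ∧ ‖x'‖ = 1 ∧ x' x = 1 ∧ r = ‖x' (f x)‖}

/-- The `k`-polynomial numerical index `n^(k)(X)`. -/
noncomputable def polyNumIndex (𝕂 : Type*) [RCLike 𝕂] (X : Type*) [NormedAddCommGroup X]
    [NormedSpace 𝕂 X] (k : ℕ) : ℝ :=
  sInf {r | ∃ L : ContinuousMultilinearMap 𝕂 (fun _ : Fin k => X) X,
    supNorm (polyEval L) = 1 ∧ r = numRadius 𝕂 (polyEval L)}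

/-- The numerical index `n(X)` of a Banach space. -/
noncomputable def numIndex (𝕂 : Type*) [RCLike 𝕂] (X : Type*) [NormedAddCommGroup X]
    [NormedSpace 𝕂 X] : ℝ :=
  sInf {r | ∃ T : X →L[𝕂] X, ‖T‖ = 1 ∧ r = numRadius 𝕂 (⇑T)}

/-- `x` is an extreme point of the convex set `s` : `y + z = 2x` with `y, z ∈ s` forces
`y = z = x`. -/
def IsExtremePt {E : Type*} [AddCommGroup E] (s : Set E) (x : E) : Prop :=
  x ∈ s ∧ ∀ y ∈ s, ∀ z ∈ s, y + z = x + x → y = x ∧ z = x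

/-- `x` is a strongly exposed point of the closed unit ball. -/
def StronglyExposedPt (𝕂 : Type*) [RCLike 𝕂] {X : Type*} [NormedAddCommGroup X]
    [NormedSpace 𝕂 X] (x : X) : Prop :=
  x ∈ Metric.closedBall (0 : X) 1 ∧ ∃ x' : X →L[𝕂] 𝕂, x' ≠ 0 ∧ ‖x'‖ ≤ 1 ∧
    (∀ y ∈ Metric.closedBall (0 : X) 1, RCLike.re (x' y) ≤ RCLike.re (x' x)) ∧
    ∀ xs : ℕ → X, (∀ n, xs n ∈ Metric.closedBall (0 : X) 1) →
      Tendsto (fun n => RCLike.re (x' (xs n))) atTop (nhds (RCLike.re (x' x))) →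
      Tendsto xs atTop (nhds x)

/-- `x'` is a weak-* exposed point of the dual unit ball. -/
def WeakStarExposed (𝕂 : Type*) [RCLike 𝕂] {X : Type*} [NormedAddCommGroup X]
    [NormedSpace 𝕂 X] (x' : X →L[𝕂] 𝕂) : Prop :=
  ‖x'‖ ≤ 1 ∧ ∃ x ∈ Metric.closedBall (0 : X) 1, x' x = 1 ∧
    ∀ y' : X →L[𝕂] 𝕂, ‖y'‖ ≤ 1 → y' x = 1 → y' = x'

/-- `f` is a strong peak function at `x₀`: `f` is nonzero on the ball and every maximizing
sequence in the closed unit ball converges to `x₀`. -/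
def StrongPeakAt {X Y : Type*} [NormedAddCommGroup X] [NormedAddCommGroup Y]
    (f : X → Y) (x₀ : X) : Prop :=
  (∃ x ∈ Metric.closedBall (0 : X) 1, f x ≠ 0) ∧
    ∀ xs : ℕ → X, (∀ n, xs n ∈ Metric.closedBall (0 : X) 1) →
      Tendsto (fun n => ‖f (xs n)‖) atTop (nhds (supNorm f)) →
      Tendsto xs atTop (nhds x₀)

/-- Complex extreme point of the closed unit ball. -/
def ComplexExtremePoint {X : Type*} [NormedAddCommGroup X] [NormedSpace ℂ X] (x : X) : Prop :=
  x ∈ Metric.closedBall (0 : X) 1 ∧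
    ∀ y : X, (∀ θ : ℝ, ‖x + Complex.exp (θ * Complex.I) • y‖ ≤ 1) → y = 0

/-- Membership in `A_b(B_X : Y)`: bounded, continuous on the closed unit ball and
holomorphic on the open unit ball. -/
def MemAb {X Y : Type*} [NormedAddCommGroup X] [NormedSpace ℂ X] [NormedAddCommGroup Y]
    [NormedSpace ℂ Y] (f : X → Y) : Prop :=
  ContinuousOn f (Metric.closedBall (0 : X) 1) ∧
    (∃ C, ∀ x ∈ Metric.closedBall (0 : X) 1, ‖f x‖ ≤ C) ∧
    DifferentiableOn ℂ f (Metric.ball (0 : X) 1)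

/-- Membership in `A_u(B_X : Y)`: additionally uniformly continuous on the closed ball. -/
def MemAu {X Y : Type*} [NormedAddCommGroup X] [NormedSpace ℂ X] [NormedAddCommGroup Y]
    [NormedSpace ℂ Y] (f : X → Y) : Prop :=
  MemAb f ∧ UniformContinuousOn f (Metric.closedBall (0 : X) 1)

/-- The set `ρA_u(B_X)` of strong peak points of `A_u(B_X)`. -/
def strongPeakPtsAu (X : Type*) [NormedAddCommGroup X] [NormedSpace ℂ X] : Set X :=
  {x₀ | ∃ f : X → ℂ, MemAu f ∧ StrongPeakAt f x₀}

/-- The holomorphic numerical index `n_u(X)`. -/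
noncomputable def holNumIndex (X : Type*) [NormedAddCommGroup X] [NormedSpace ℂ X] : ℝ :=
  sInf {r | ∃ f : X → X, MemAu f ∧ supNorm f = 1 ∧ r = numRadius ℂ f}
section AuxStatement3

variable {𝕂 X Y : Type*} [RCLike 𝕂] [NormedAddCommGroup X] [NormedSpace 𝕂 X]
  [NormedAddCommGroup Y] [NormedSpace 𝕂 Y] {k : ℕ}

lemma polyEval_norm_le_opNorm (P : ContinuousMultilinearMap 𝕂 (fun _ : Fin k => X) Y)
    {x : X} (hx : x ∈ Metric.closedBall (0 : X) 1) : ‖polyEval P x‖ ≤ ‖P‖ := by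
  have h := P.le_opNorm (fun _ => x)
  have hx1 : ‖x‖ ≤ 1 := by simpa using hx
  have hprod : (∏ _i : Fin k, ‖x‖) ≤ 1 :=
    Finset.prod_le_one (fun _ _ => norm_nonneg x) (fun _ _ => hx1)
  calc ‖polyEval P x‖ ≤ ‖P‖ * ∏ _i : Fin k, ‖x‖ := h
    _ ≤ ‖P‖ * 1 := mul_le_mul_of_nonneg_left hprod (norm_nonneg P)
    _ = ‖P‖ := mul_one _

lemma polyEval_bddAbove (P : ContinuousMultilinearMap 𝕂 (fun _ : Fin k => X) Y) :
    BddAbove ((fun x => ‖polyEval P x‖) '' Metric.closedBall (0 : X) 1) := by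
  refine ⟨‖P‖, ?_⟩
  rintro r ⟨x, hx, rfl⟩
  exact polyEval_norm_le_opNorm P hx

lemma polyEval_le_supNorm (P : ContinuousMultilinearMap 𝕂 (fun _ : Fin k => X) Y)
    {x : X} (hx : x ∈ Metric.closedBall (0 : X) 1) :
    ‖polyEval P x‖ ≤ supNorm (polyEval P) :=
  le_csSup (polyEval_bddAbove P) ⟨x, hx, rfl⟩

lemma supNorm_polyEval_le (P : ContinuousMultilinearMap 𝕂 (fun _ : Fin k => X) Y)
    {a : ℝ} (ha : ∀ x ∈ Metric.closedBall (0 : X) 1, ‖polyEval P x‖ ≤ a) :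
    supNorm (polyEval P) ≤ a := by
  refine csSup_le ⟨‖polyEval P 0‖, ⟨0, by simp, rfl⟩⟩ ?_
  rintro r ⟨x, hx, rfl⟩
  exact ha x hx

lemma supNorm_polyEval_nonneg (P : ContinuousMultilinearMap 𝕂 (fun _ : Fin k => X) Y) :
    0 ≤ supNorm (polyEval P) :=
  le_trans (norm_nonneg _) (polyEval_le_supNorm P (x := 0) (by simp))

end AuxStatement3

/-- if every bounded `k`-homogeneous polynomial `X → Y` can be approximated in
norm by strongly norm-attaining ones, then `ρ̃𝒫(ᵏX)` is a norming set for `𝒫(ᵏX : Y)`. -/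
theorem statement3 {𝕂 X Y : Type*} [RCLike 𝕂] [NormedAddCommGroup X] [NormedSpace 𝕂 X]
    [NormedAddCommGroup Y] [NormedSpace 𝕂 Y] [CompleteSpace X] [CompleteSpace Y]
    {k : ℕ} (hk : 1 ≤ k)
    (happrox : ∀ P : ContinuousMultilinearMap 𝕂 (fun _ : Fin k => X) Y, ∀ ε > (0 : ℝ),
      ∃ (Q : ContinuousMultilinearMap 𝕂 (fun _ : Fin k => X) Y) (x₀ : X),
        StronglyAttains 𝕂 (polyEval Q) x₀ ∧
          ∀ x ∈ Metric.closedBall (0 : X) 1, ‖polyEval P x - polyEval Q x‖ ≤ ε) :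
    ∀ P : ContinuousMultilinearMap 𝕂 (fun _ : Fin k => X) Y,
      supNorm (polyEval P) = sSup ((fun x => ‖polyEval P x‖) '' polyAttainPts 𝕂 X k) := by
  intro P
  set S := sSup ((fun x => ‖polyEval P x‖) '' polyAttainPts 𝕂 X k) with hSdef
  have hSbdd : BddAbove ((fun x => ‖polyEval P x‖) '' polyAttainPts 𝕂 X k) := by
    refine ⟨‖P‖, ?_⟩
    rintro r ⟨x, hx, rfl⟩
    exact polyEval_norm_le_opNorm P hx.1
  have hSnonneg : 0 ≤ S := by
    apply Real.sSup_nonneg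
    rintro r ⟨x, hx, rfl⟩
    exact norm_nonneg _
  have hSle : S ≤ supNorm (polyEval P) := by
    apply Real.sSup_le
    · rintro r ⟨x, hx, rfl⟩
      exact polyEval_le_supNorm P hx.1
    · exact supNorm_polyEval_nonneg P
  refine le_antisymm ?_ hSle
  refine le_of_forall_pos_le_add ?_
  intro ε hε
  obtain ⟨Q, x₀, hSA, hclose⟩ := happrox P (ε / 2) (by positivity)
  -- supNorm P ≤ supNorm Q + ε/2
  have hPQ : supNorm (polyEval P) ≤ supNorm (polyEval Q) + ε / 2 := by
    apply supNorm_polyEval_le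
    intro x hx
    calc ‖polyEval P x‖ ≤ ‖polyEval P x - polyEval Q x‖ + ‖polyEval Q x‖ := by
          simpa using norm_add_le (polyEval P x - polyEval Q x) (polyEval Q x)
      _ ≤ ε / 2 + supNorm (polyEval Q) := add_le_add (hclose x hx) (polyEval_le_supNorm Q hx)
      _ = supNorm (polyEval Q) + ε / 2 := by ring
  by_cases hQ0 : supNorm (polyEval Q) ≤ 0
  · -- then supNorm P ≤ ε/2, done since S ≥ 0
    have : supNorm (polyEval P) ≤ ε / 2 := by
      linarith [hPQ]
    linarith
  push_neg at hQ0
  -- build a maximizing sequence for Q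
  obtain ⟨u, hu_mono, hu_tend, hu_mem⟩ :=
    exists_seq_tendsto_sSup (α := ℝ)
      (S := (fun x => ‖polyEval Q x‖) '' Metric.closedBall (0 : X) 1)
      ⟨‖polyEval Q 0‖, ⟨0, by simp, rfl⟩⟩ (polyEval_bddAbove Q)
  choose xs hxs_mem hxs_eq using hu_mem
  have hxs_tend : Tendsto (fun n => ‖polyEval Q (xs n)‖) atTop (nhds (supNorm (polyEval Q))) := by
    simp only [hxs_eq]
    exact hu_tend
  obtain ⟨α, φ, hφ, hα, htend⟩ := hSA xs hxs_mem hxs_tend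
  have hcont : Continuous (polyEval Q) :=
    Q.cont.comp (continuous_pi fun _ => continuous_id)
  have h1 : Tendsto (fun n => ‖polyEval Q (xs (φ n))‖) atTop
      (nhds ‖polyEval Q (α • x₀)‖) := ((hcont.tendsto _).comp htend).norm
  have h2 : Tendsto (fun n => ‖polyEval Q (xs (φ n))‖) atTop
      (nhds (supNorm (polyEval Q))) := hxs_tend.comp hφ.tendsto_atTop
  have hval : ‖polyEval Q (α • x₀)‖ = supNorm (polyEval Q) := tendsto_nhds_unique h1 h2
  -- homogeneity
  have hsmul : polyEval Q (α • x₀) = (∏ _i : Fin k, α) • polyEval Q x₀ := by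
    have := Q.map_smul_univ (fun _ => α) (fun _ => x₀)
    simpa [polyEval] using this
  have hQx₀ : ‖polyEval Q x₀‖ = supNorm (polyEval Q) := by
    rw [hsmul] at hval
    rw [norm_smul] at hval
    simp only [Finset.prod_const, Finset.card_fin] at hval
    rw [norm_pow, hα, one_pow, one_mul] at hval
    exact hval
  have hQx₀ne : polyEval Q x₀ ≠ 0 := by
    intro h
    rw [h, norm_zero] at hQx₀
    exact absurd hQx₀.symm (ne_of_gt hQ0)
  -- x₀ is in the closed unit ball
  have hαx₀ : α • x₀ ∈ Metric.closedBall (0 : X) 1 :=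
    isClosed_closedBall.mem_of_tendsto htend (Eventually.of_forall fun n => hxs_mem _)
  have hx₀ball : x₀ ∈ Metric.closedBall (0 : X) 1 := by
    have h1 : ‖α • x₀‖ ≤ 1 := by simpa using hαx₀
    rw [norm_smul, hα, one_mul] at h1
    simpa using h1
  -- dual functional
  obtain ⟨g, hg1, hg2⟩ := exists_dual_vector 𝕂 (polyEval Q x₀) (norm_ne_zero_iff.mpr hQx₀ne)
  set L := g.compContinuousMultilinearMap Q with hLdef
  have hLapp : ∀ x : X, polyEval L x = g (polyEval Q x) := fun x => rfl
  have hLx₀ : ‖polyEval L x₀‖ = supNorm (polyEval Q) := by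
    rw [hLapp, hg2]
    rw [← hQx₀]
    simp [RCLike.norm_ofReal, abs_of_nonneg (norm_nonneg _)]
  have hLle : ∀ x ∈ Metric.closedBall (0 : X) 1, ‖polyEval L x‖ ≤ supNorm (polyEval Q) := by
    intro x hx
    rw [hLapp]
    calc ‖g (polyEval Q x)‖ ≤ ‖g‖ * ‖polyEval Q x‖ := g.le_opNorm _
      _ = ‖polyEval Q x‖ := by rw [hg1, one_mul]
      _ ≤ supNorm (polyEval Q) := polyEval_le_supNorm Q hx
  have hLsup : supNorm (polyEval L) = supNorm (polyEval Q) := by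
    refine le_antisymm (supNorm_polyEval_le L hLle) ?_
    rw [← hLx₀]
    exact polyEval_le_supNorm L hx₀ball
  -- L strongly attains at x₀
  have hLSA : StronglyAttains 𝕂 (polyEval L) x₀ := by
    intro ys hys hmax
    rw [hLsup] at hmax
    have hQmax : Tendsto (fun n => ‖polyEval Q (ys n)‖) atTop
        (nhds (supNorm (polyEval Q))) := by
      refine tendsto_of_tendsto_of_tendsto_of_le_of_le hmax tendsto_const_nhds ?_ ?_
      · intro n
        show ‖polyEval L (ys n)‖ ≤ ‖polyEval Q (ys n)‖
        rw [hLapp]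
        calc ‖g (polyEval Q (ys n))‖ ≤ ‖g‖ * ‖polyEval Q (ys n)‖ := g.le_opNorm _
          _ = ‖polyEval Q (ys n)‖ := by rw [hg1, one_mul]
      · intro n
        show ‖polyEval Q (ys n)‖ ≤ supNorm (polyEval Q)
        exact polyEval_le_supNorm Q (hys n)
    exact hSA ys hys hQmax
  have hLne : polyEval L ≠ 0 := by
    intro h
    have hx : polyEval L x₀ = 0 := by rw [h]; rfl
    rw [hx, norm_zero] at hLx₀
    exact absurd hLx₀.symm (ne_of_gt hQ0)
  have hx₀mem : x₀ ∈ polyAttainPts 𝕂 X k := ⟨hx₀ball, L, hLne, hLSA⟩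
  -- finish
  have hPx₀ : supNorm (polyEval Q) - ε / 2 ≤ ‖polyEval P x₀‖ := by
    have h1 : ‖polyEval Q x₀‖ - ‖polyEval P x₀‖ ≤ ‖polyEval Q x₀ - polyEval P x₀‖ :=
      norm_sub_norm_le _ _
    have h2 : ‖polyEval Q x₀ - polyEval P x₀‖ = ‖polyEval P x₀ - polyEval Q x₀‖ :=
      norm_sub_rev _ _
    have h3 := hclose x₀ hx₀ball
    rw [← hQx₀]
    linarith
  have hSx₀ : ‖polyEval P x₀‖ ≤ S := le_csSup hSbdd ⟨x₀, hx₀mem, rfl⟩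
  linarith
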